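/- Let N ≥ 1 be an integer and for v ∈ ℝ^N define ‖v‖_P := sqrt( (1/N) Σ_{i=1}^N v_i² ). Let V ⊆ ℝ^N, let E : ℝ^N → ℝ satisfy E(v) ≥ 0 for all v, let λ ≥ 0 and B ≥ 0 be real numbers, let f, e ∈ ℝ^N, and set z = f + e. Suppose s* ∈ V minimizes the penalized least squares objective over V, i.e., ‖z − s*‖_P² + λ E(s*) ≤ ‖z − s‖_P² + λ E(s) for all s ∈ V, and suppose there exists s_f ∈ V with ‖f − s_f‖_P ≤ B and E(s_f) ≤ E(f). Then ‖f − s*‖_P ≤ B + 2‖e‖_P + sqrt(λ E(f)). -/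
import Mathlib


/-- The rooted mean squares (RMS) seminorm of a vector in `ℝ^N`:
`‖v‖_P = sqrt((1/N) Σ_i v_i²)`. -/
noncomputable def rmsNorm {N : ℕ} (v : Fin N → ℝ) : ℝ :=
  Real.sqrt ((1 / (N : ℝ)) * ∑ i, (v i) ^ 2)

lemma rmsNorm_nonneg {N : ℕ} (v : Fin N → ℝ) : 0 ≤ rmsNorm v := Real.sqrt_nonneg _

lemma rmsNorm_eq {N : ℕ} (v : Fin N → ℝ) :
    rmsNorm v = Real.sqrt (1 / (N : ℝ)) * ‖(WithLp.equiv 2 (Fin N → ℝ)).symm v‖ := by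
  rw [rmsNorm, EuclideanSpace.norm_eq, ← Real.sqrt_mul (by positivity)]
  have h : ∀ i, ‖(WithLp.equiv 2 (Fin N → ℝ)).symm v i‖ ^ 2 = v i ^ 2 := fun i => by
    simp [Real.norm_eq_abs, sq_abs]
  simp_rw [h]

lemma rmsNorm_add_le {N : ℕ} (a b : Fin N → ℝ) :
    rmsNorm (a + b) ≤ rmsNorm a + rmsNorm b := by
  rw [rmsNorm_eq, rmsNorm_eq, rmsNorm_eq, ← mul_add]
  apply mul_le_mul_of_nonneg_left _ (Real.sqrt_nonneg _)
  have : (WithLp.equiv 2 (Fin N → ℝ)).symm (a + b)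
      = (WithLp.equiv 2 (Fin N → ℝ)).symm a + (WithLp.equiv 2 (Fin N → ℝ)).symm b := rfl
  rw [this]
  exact norm_add_le _ _

lemma rmsNorm_neg {N : ℕ} (v : Fin N → ℝ) : rmsNorm (-v) = rmsNorm v := by
  unfold rmsNorm
  congr 1
  simp

/-- abstract error bound for penalized least squares fitting. If `s*`
minimizes `‖z − s‖_P² + λE(s)` over `V` with `z = f + e`, and some `s_f ∈ V` satisfies
`‖f − s_f‖_P ≤ B` and `E(s_f) ≤ E(f)`, then `‖f − s*‖_P ≤ B + 2‖e‖_P + sqrt(λE(f))`. -/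
theorem penalized_least_squares_error
    (N : ℕ) (hN : 1 ≤ N)
    (V : Set (Fin N → ℝ)) (E : (Fin N → ℝ) → ℝ) (hE : ∀ v, 0 ≤ E v)
    (lam B : ℝ) (hlam : 0 ≤ lam) (hB : 0 ≤ B)
    (f e : Fin N → ℝ)
    (sStar : Fin N → ℝ) (hsStarV : sStar ∈ V)
    (hmin : ∀ s ∈ V,
      rmsNorm (f + e - sStar) ^ 2 + lam * E sStar ≤ rmsNorm (f + e - s) ^ 2 + lam * E s)
    (sf : Fin N → ℝ) (hsfV : sf ∈ V)
    (hsfB : rmsNorm (f - sf) ≤ B) (hsfE : E sf ≤ E f) :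
    rmsNorm (f - sStar) ≤ B + 2 * rmsNorm e + Real.sqrt (lam * E f) := by
  set nE := rmsNorm e with hnE
  have hnE0 : 0 ≤ nE := rmsNorm_nonneg e
  set s := Real.sqrt (lam * E f) with hs
  have hs0 : 0 ≤ s := Real.sqrt_nonneg _
  have hs2 : s ^ 2 = lam * E f := Real.sq_sqrt (mul_nonneg hlam (hE f))
  set A := rmsNorm (f + e - sStar) with hA
  have hA0 : 0 ≤ A := rmsNorm_nonneg _
  -- step 1: ‖f - s*‖ ≤ A + nE
  have h1 : rmsNorm (f - sStar) ≤ A + nE := by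
    have : f - sStar = (f + e - sStar) + (-e) := by abel
    calc rmsNorm (f - sStar) ≤ rmsNorm (f + e - sStar) + rmsNorm (-e) := by
          rw [this]; exact rmsNorm_add_le _ _
      _ = A + nE := by rw [rmsNorm_neg]
  -- step 2: rmsNorm (f + e - sf) ≤ B + nE
  have h2 : rmsNorm (f + e - sf) ≤ B + nE := by
    have : f + e - sf = (f - sf) + e := by abel
    calc rmsNorm (f + e - sf) ≤ rmsNorm (f - sf) + rmsNorm e := by
          rw [this]; exact rmsNorm_add_le _ _
      _ ≤ B + nE := by linarith
  -- step 3: A² ≤ (B + nE + s)²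
  have h3 : A ^ 2 ≤ (B + nE + s) ^ 2 := by
    have hmin' := hmin sf hsfV
    have hsq : rmsNorm (f + e - sf) ^ 2 ≤ (B + nE) ^ 2 :=
      pow_le_pow_left₀ (rmsNorm_nonneg _) h2 2
    have hlE : lam * E sf ≤ lam * E f := mul_le_mul_of_nonneg_left hsfE hlam
    have hEstar : 0 ≤ lam * E sStar := mul_nonneg hlam (hE sStar)
    nlinarith [mul_nonneg (add_nonneg hB hnE0) hs0]
  have h4 : A ≤ B + nE + s := by
    have hr : 0 ≤ B + nE + s := by positivity
    calc A = Real.sqrt (A ^ 2) := (Real.sqrt_sq hA0).symm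
      _ ≤ Real.sqrt ((B + nE + s) ^ 2) := Real.sqrt_le_sqrt h3
      _ = B + nE + s := Real.sqrt_sq hr
  linarith
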